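/- arXiv:2604.14083 — 2 statements merged into one kernel-verified Lean document; each statement's English description precedes it below -/
import Mathlib

section
/- If two finite multisets of positive reals {l_1,…,l_n} and {l'_1,…,l'_n} satisfy ∏_{j=1}^n sinc(2π l_j ξ) = ∏_{j=1}^n sinc(2π l'_j ξ) for all ξ ∈ ℝ, then the multisets are equal. -/
open Real

/-- `_root_.sinc x = sin x / x` with `_root_.sinc 0 = 1`. -/
noncomputable def sinc (x : ℝ) : ℝ := if x = 0 then 1 else Real.sin x / x

lemma sinc_eq_zero_iff {x : ℝ} : _root_.sinc x = 0 ↔ x ≠ 0 ∧ Real.sin x = 0 := by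
  unfold _root_.sinc
  rcases eq_or_ne x 0 with rfl | hx
  · simp
  · simp [hx, div_eq_zero_iff]

lemma continuous_sinc : Continuous _root_.sinc := by
  rw [continuous_iff_continuousAt]
  intro x
  rcases eq_or_ne x 0 with rfl | hx
  · have h1 : Filter.Tendsto (fun y : ℝ => Real.sin y / y) (nhdsWithin 0 {(0:ℝ)}ᶜ) (nhds 1) := by
      have h := Real.hasDerivAt_sin 0
      rw [hasDerivAt_iff_tendsto_slope] at h
      simp only [Real.cos_zero] at h
      refine h.congr (fun y => ?_)
      simp [slope_def_field, Real.sin_zero]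
    have h2 : Filter.Tendsto _root_.sinc (nhdsWithin 0 {(0:ℝ)}ᶜ) (nhds 1) := by
      refine Filter.Tendsto.congr' ?_ h1
      filter_upwards [self_mem_nhdsWithin] with y hy
      have hy' : y ≠ 0 := hy
      simp [_root_.sinc, hy']
    have h3 : Filter.Tendsto _root_.sinc (pure (0:ℝ)) (nhds 1) := by
      have : _root_.sinc 0 = 1 := by simp [_root_.sinc]
      simpa [this] using tendsto_pure_nhds _root_.sinc (0:ℝ)
    have : ContinuousAt _root_.sinc 0 := by
      unfold ContinuousAt
      have h0 : _root_.sinc 0 = 1 := by simp [_root_.sinc]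
      rw [h0, ← nhdsNE_sup_pure (0:ℝ)]
      exact Filter.Tendsto.sup h2 h3
    exact this
  · have hc : ContinuousAt (fun y : ℝ => Real.sin y / y) x :=
      Real.continuous_sin.continuousAt.div continuousAt_id hx
    refine hc.congr ?_
    filter_upwards [isOpen_compl_singleton.mem_nhds hx] with y hy
    simp [_root_.sinc, Set.mem_compl_iff, Set.mem_singleton_iff] at hy ⊢
    simp [hy]

lemma sinc_pi_mul_eq_zero {a M : ℝ} (ha : 0 < a) (hM : 0 < M)
    (h : _root_.sinc (2 * π * a * (1 / (2 * M))) = 0) : ∃ k : ℕ, 1 ≤ k ∧ a = k * M := by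
  rw [sinc_eq_zero_iff] at h
  obtain ⟨-, hs⟩ := h
  rw [Real.sin_eq_zero_iff] at hs
  obtain ⟨m, hm⟩ := hs
  have hπ := Real.pi_pos
  have hval : 2 * π * a * (1 / (2 * M)) = (a / M) * π := by
    field_simp
  rw [hval] at hm
  have hm' : (m : ℝ) = a / M := by
    have := mul_right_cancel₀ (ne_of_gt hπ) hm
    exact this
  have hmpos : 0 < (m : ℝ) := by
    rw [hm']; positivity
  have hm0 : 0 < m := by exact_mod_cast hmpos
  refine ⟨m.toNat, ?_, ?_⟩
  · omega
  · have : (m.toNat : ℝ) = (m : ℝ) := by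
      norm_cast; omega
    rw [this, hm']
    field_simp

lemma sinc_at_half_period {M : ℝ} (hM : 0 < M) : _root_.sinc (2 * π * M * (1 / (2 * M))) = 0 := by
  have hval : 2 * π * M * (1 / (2 * M)) = π := by field_simp
  rw [hval, sinc_eq_zero_iff]
  exact ⟨ne_of_gt Real.pi_pos, Real.sin_pi⟩

lemma continuous_sinc_prod (s : Multiset ℝ) :
    Continuous (fun ξ : ℝ => (s.map (fun a => _root_.sinc (2 * π * a * ξ))).prod) := by
  induction s using Multiset.induction with
  | empty => simpa using continuous_const
  | cons a s ih =>
    simp only [Multiset.map_cons, Multiset.prod_cons]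
    exact (_root_.continuous_sinc.comp (by continuity)).mul ih

lemma sinc_zero_set_countable {M : ℝ} (hM : 0 < M) :
    {ξ : ℝ | _root_.sinc (2 * π * M * ξ) = 0}.Countable := by
  have hsub : {ξ : ℝ | _root_.sinc (2 * π * M * ξ) = 0} ⊆ Set.range (fun k : ℤ => (k : ℝ) / (2 * M)) := by
    intro ξ hξ
    rw [Set.mem_setOf_eq, sinc_eq_zero_iff] at hξ
    obtain ⟨-, hs⟩ := hξ
    rw [Real.sin_eq_zero_iff] at hs
    obtain ⟨m, hm⟩ := hs
    refine ⟨m, ?_⟩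
    have hπ := Real.pi_pos
    have : (m : ℝ) * π = 2 * π * M * ξ := hm
    have h2M : (2 : ℝ) * M ≠ 0 := by positivity
    field_simp
    nlinarith [this]
  exact Set.Countable.mono hsub (Set.countable_range _)

lemma multiset_sinc_key : ∀ (N : ℕ) (s t : Multiset ℝ), Multiset.card s = N →
    Multiset.card t = N → (∀ x ∈ s, 0 < x) → (∀ x ∈ t, 0 < x) →
    (∀ ξ : ℝ, (s.map (fun a => _root_.sinc (2 * π * a * ξ))).prod
      = (t.map (fun a => _root_.sinc (2 * π * a * ξ))).prod) → s = t := by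
  intro N
  induction N with
  | zero =>
    intro s t hs ht _ _ _
    rw [Multiset.card_eq_zero] at hs ht
    rw [hs, ht]
  | succ N ih =>
    intro s t hs ht hspos htpos h
    -- extract maxima
    have hsne : s ≠ 0 := by
      intro h0; rw [h0] at hs; simp at hs
    have htne : t ≠ 0 := by
      intro h0; rw [h0] at ht; simp at ht
    obtain ⟨M, hMfin, hMmax⟩ := Finset.exists_max_image s.toFinset id
      (by rwa [Multiset.toFinset_nonempty])
    obtain ⟨M', hM'fin, hM'max⟩ := Finset.exists_max_image t.toFinset id
      (by rwa [Multiset.toFinset_nonempty])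
    rw [Multiset.mem_toFinset] at hMfin hM'fin
    simp only [id, Multiset.mem_toFinset] at hMmax hM'max
    have hMpos : 0 < M := hspos M hMfin
    have hM'pos : 0 < M' := htpos M' hM'fin
    -- at ξ = 1/(2M) the s-product vanishes, hence some element of t is ≥ M
    have key : ∀ (u v : Multiset ℝ) (K : ℝ), 0 < K → K ∈ u → (∀ x ∈ v, 0 < x) →
        ((u.map (fun a => _root_.sinc (2 * π * a * (1/(2*K))))).prod
          = (v.map (fun a => _root_.sinc (2 * π * a * (1/(2*K))))).prod) →
        ∃ b ∈ v, ∃ k : ℕ, 1 ≤ k ∧ b = k * K := by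
      intro u v K hK hKu hvpos heq
      have hu0 : (u.map (fun a => _root_.sinc (2 * π * a * (1/(2*K))))).prod = 0 := by
        apply Multiset.prod_eq_zero
        refine Multiset.mem_map.2 ⟨K, hKu, ?_⟩
        exact sinc_at_half_period hK
      rw [hu0] at heq
      have := Multiset.prod_eq_zero_iff.1 heq.symm
      obtain ⟨b, hb, hb0⟩ := Multiset.mem_map.1 this
      obtain ⟨k, hk1, hk⟩ := sinc_pi_mul_eq_zero (hvpos b hb) hK hb0
      exact ⟨b, hb, k, hk1, hk⟩
    obtain ⟨b, hbt, k, hk1, hbk⟩ := key s t M hMpos hMfin htpos (h (1/(2*M)))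
    obtain ⟨c, hcs, k', hk'1, hck'⟩ := key t s M' hM'pos hM'fin hspos (h (1/(2*M'))).symm
    have hble : M ≤ b := by
      rw [hbk]
      have : (1 : ℝ) ≤ k := by exact_mod_cast hk1
      nlinarith
    have hcle : M' ≤ c := by
      rw [hck']
      have : (1 : ℝ) ≤ k' := by exact_mod_cast hk'1
      nlinarith
    have hMM' : M = M' := le_antisymm (le_trans hble (hM'max b hbt)) (le_trans hcle (hMmax c hcs))
    have hMt : M ∈ t := hMM' ▸ hM'fin
    -- cancel the common factor _root_.sinc(2πMξ)
    set s' := s.erase M with hs'def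
    set t' := t.erase M with ht'def
    have hscons : s = M ::ₘ s' := (Multiset.cons_erase hMfin).symm
    have htcons : t = M ::ₘ t' := (Multiset.cons_erase hMt).symm
    have hs'card : Multiset.card s' = N := by
      have := congrArg Multiset.card hscons
      rw [Multiset.card_cons, hs] at this
      omega
    have ht'card : Multiset.card t' = N := by
      have := congrArg Multiset.card htcons
      rw [Multiset.card_cons, ht] at this
      omega
    have hs'pos : ∀ x ∈ s', 0 < x := fun x hx => hspos x (Multiset.mem_of_mem_erase hx)
    have ht'pos : ∀ x ∈ t', 0 < x := fun x hx => htpos x (Multiset.mem_of_mem_erase hx)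
    have heqon : Set.EqOn (fun ξ : ℝ => (s'.map (fun a => _root_.sinc (2 * π * a * ξ))).prod)
        (fun ξ : ℝ => (t'.map (fun a => _root_.sinc (2 * π * a * ξ))).prod)
        {ξ : ℝ | _root_.sinc (2 * π * M * ξ) = 0}ᶜ := by
      intro ξ hξ
      have hne : _root_.sinc (2 * π * M * ξ) ≠ 0 := hξ
      have hξeq := h ξ
      rw [hscons, htcons] at hξeq
      simp only [Multiset.map_cons, Multiset.prod_cons] at hξeq
      exact mul_left_cancel₀ hne hξeq
    have hdense : Dense ({ξ : ℝ | _root_.sinc (2 * π * M * ξ) = 0}ᶜ) :=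
      (sinc_zero_set_countable hMpos).dense_compl ℝ
    have hfull := Continuous.ext_on hdense (continuous_sinc_prod s') (continuous_sinc_prod t') heqon
    have h' : ∀ ξ : ℝ, (s'.map (fun a => _root_.sinc (2 * π * a * ξ))).prod
        = (t'.map (fun a => _root_.sinc (2 * π * a * ξ))).prod := fun ξ => congrFun hfull ξ
    have := ih s' t' hs'card ht'card hs'pos ht'pos h'
    rw [hscons, htcons, this]

/-- If two products of `_root_.sinc(2π l_j ξ)` with positive parameters agree for all real `ξ`,
then the multisets of parameters coincide (i.e. they agree up to a permutation). -/
theorem sinc_prod_determines_multiset (n : ℕ) (l l' : Fin n → ℝ)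
    (hl : ∀ j, 0 < l j) (hl' : ∀ j, 0 < l' j)
    (h : ∀ ξ : ℝ, ∏ j, _root_.sinc (2 * π * l j * ξ) = ∏ j, _root_.sinc (2 * π * l' j * ξ)) :
    ∃ σ : Equiv.Perm (Fin n), ∀ j, l' (σ j) = l j := by
  have hmult : (↑(List.ofFn l) : Multiset ℝ) = (↑(List.ofFn l') : Multiset ℝ) := by
    apply multiset_sinc_key n
    · simp
    · simp
    · intro x hx
      obtain ⟨j, rfl⟩ := (List.mem_ofFn' _ _).1 (by exact_mod_cast hx)
      exact hl j
    · intro x hx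
      obtain ⟨j, rfl⟩ := (List.mem_ofFn' _ _).1 (by exact_mod_cast hx)
      exact hl' j
    · intro ξ
      have e1 : ((↑(List.ofFn l) : Multiset ℝ).map (fun a => _root_.sinc (2 * π * a * ξ))).prod
          = ∏ j, _root_.sinc (2 * π * l j * ξ) := by
        rw [Multiset.map_coe, Multiset.prod_coe, List.map_ofFn, List.prod_ofFn]
        rfl
      have e2 : ((↑(List.ofFn l') : Multiset ℝ).map (fun a => _root_.sinc (2 * π * a * ξ))).prod
          = ∏ j, _root_.sinc (2 * π * l' j * ξ) := by
        rw [Multiset.map_coe, Multiset.prod_coe, List.map_ofFn, List.prod_ofFn]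
        rfl
      rw [e1, e2]
      exact h ξ
  have hperm : (List.ofFn l).Perm (List.ofFn l') := Multiset.coe_eq_coe.1 hmult
  -- sorted versions agree
  set σl := Tuple.sort l
  set σl' := Tuple.sort l'
  have hsorted : l ∘ σl = l' ∘ σl' := by
    apply List.ofFn_injective
    exact List.Perm.eq_of_sortedLE
      (hl₁₂ := ((σl.ofFn_comp_perm l).trans hperm).trans (σl'.ofFn_comp_perm l').symm)
      (Tuple.monotone_sort l).sortedLE_ofFn (Tuple.monotone_sort l').sortedLE_ofFn
  refine ⟨σl.symm.trans σl', fun j => ?_⟩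
  have := congrFun hsorted (σl.symm j)
  simpa using this.symm
end

section
/- The convolution of n uniform distributions Unif(b_j − l_j, b_j + l_j), j = 1,…,n, uniquely determines the multiset of widths {l_1, …, l_n} and the sum of shifts ∑_{j=1}^n b_j: if two such convolutions (with the same n) are equal as probability measures, then the multisets {l_j} and {l'_j} coincide and ∑ b_j = ∑ b'_j. -/
open MeasureTheory Set Filter Real Topology

/-- The uniform probability measure on `[b-l, b+l]`. -/
noncomputable def unif (b l : ℝ) : Measure ℝ :=
  (ENNReal.ofReal (2 * l))⁻¹ • volume.restrict (Set.Icc (b - l) (b + l))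

lemma unif_prob {b l : ℝ} (hl : 0 < l) : IsProbabilityMeasure (unif b l) := by
  constructor
  rw [unif, Measure.smul_apply, Measure.restrict_apply MeasurableSet.univ, Set.univ_inter,
    Real.volume_Icc, smul_eq_mul, show b + l - (b - l) = 2 * l by ring,
    ENNReal.inv_mul_cancel (by positivity) ENNReal.ofReal_ne_top]

lemma integral_unif {b l t : ℝ} (hl : 0 < l) (ht : t ≠ 0) :
    ∫ x, Real.exp (t * x) ∂(unif b l)
      = Real.exp (t * b) * (Real.sinh (t * l) / (t * l)) := by
  rw [unif, integral_smul_measure]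
  rw [show (ENNReal.ofReal (2*l))⁻¹.toReal = (2*l)⁻¹ by
    rw [ENNReal.toReal_inv, ENNReal.toReal_ofReal (by positivity)]]
  rw [MeasureTheory.integral_Icc_eq_integral_Ioc,
     ← intervalIntegral.integral_of_le (by linarith)]
  have : ∫ x in (b-l)..(b+l), Real.exp (t * x) = (Real.exp (t*(b+l)) - Real.exp (t*(b-l))) / t := by
    have h1 : ∀ x ∈ Set.uIcc (b-l) (b+l), HasDerivAt (fun y => Real.exp (t*y) / t)
        (Real.exp (t * x)) x := by
      intro x _
      have := ((Real.hasDerivAt_exp (t*x)).comp x (by simpa using (hasDerivAt_id x).const_mul t)).div_const t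
      simpa [mul_comm, mul_div_assoc, mul_div_cancel_left₀ _ ht] using this
    rw [intervalIntegral.integral_eq_sub_of_hasDerivAt h1 (by
      apply Continuous.intervalIntegrable; continuity)]
    ring
  rw [this, smul_eq_mul, Real.sinh_eq]
  field_simp
  rw [show t*(b+l) = t*b + t*l by ring, show t*(b-l) = t*b - t*l by ring,
    Real.exp_add, Real.exp_sub, Real.exp_neg]
  ring


lemma integral_pi_prod : ∀ (n : ℕ) (μ : Fin n → Measure ℝ), (∀ i, IsProbabilityMeasure (μ i)) →
    ∀ (f : Fin n → ℝ → ℝ),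
    ∫ x : Fin n → ℝ, ∏ i, f i (x i) ∂(Measure.pi μ) = ∏ i, ∫ x, f i x ∂(μ i) := by
  intro n
  induction n with
  | zero => intro μ hμ f; have : IsProbabilityMeasure (Measure.pi μ) := inferInstance; simp
  | succ n ih =>
    intro μ hμ f
    have : ∀ i, SigmaFinite (μ i) := fun i => inferInstance
    calc ∫ x : Fin (n+1) → ℝ, ∏ i, f i (x i) ∂(Measure.pi μ)
        = ∫ p : ℝ × (Fin n → ℝ), f 0 p.1 * ∏ i : Fin n, f i.succ (p.2 i)
            ∂((μ 0).prod (Measure.pi fun i => μ ((0 : Fin (n+1)).succAbove i))) := by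
          rw [← ((measurePreserving_piFinSuccAbove μ 0).symm).integral_comp']
          simp_rw [MeasurableEquiv.piFinSuccAbove_symm_apply, Fin.insertNthEquiv,
            Fin.prod_univ_succ, Fin.insertNth_zero, Equiv.coe_fn_mk, Fin.cons_succ,
            Fin.zero_succAbove, Fin.cons_zero, cast_eq]
      _ = (∫ x, f 0 x ∂(μ 0)) * ∏ i : Fin n, ∫ x, f i.succ x ∂(μ i.succ) := by
          rw [← ih _ (fun i => hμ _), ← integral_prod_mul]
          simp [Fin.zero_succAbove]
      _ = ∏ i, ∫ x, f i x ∂(μ i) := by rw [Fin.prod_univ_succ]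


lemma mgf_map_sum {n : ℕ} (μ : Fin n → Measure ℝ) [∀ i, IsProbabilityMeasure (μ i)]
    (t : ℝ) :
    ∫ y, Real.exp (t * y) ∂(Measure.map (fun x : Fin n → ℝ => ∑ j, x j) (Measure.pi μ))
      = ∏ i, ∫ x, Real.exp (t * x) ∂(μ i) := by
  rw [integral_map (Finset.univ.measurable_sum fun j _ => measurable_pi_apply j).aemeasurable
    (Continuous.aestronglyMeasurable (by continuity))]
  rw [← integral_pi_prod n μ (fun i => inferInstance) (fun _ x => Real.exp (t * x))]
  congr 1
  ext x
  rw [Finset.mul_sum, Real.exp_sum]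



lemma slope_log_one_sub : Tendsto (fun u : ℝ => Real.log (1 - u) / u) (𝓝[≠] 0) (𝓝 (-1)) := by
  have hd : HasDerivAt (fun u : ℝ => Real.log (1 - u)) (-1) 0 := by
    have h1 : HasDerivAt (fun u : ℝ => 1 - u) (-1) 0 := by
      exact (hasDerivAt_id' (0:ℝ)).const_sub 1
    have := (Real.hasDerivAt_log (by norm_num : (1:ℝ) - 0 ≠ 0)).comp 0 h1
    simpa [Function.comp_def] using this
  have := hasDerivAt_iff_tendsto_slope.mp hd
  refine this.congr' ?_
  filter_upwards [self_mem_nhdsWithin] with u hu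
  simp [slope_def_field, div_eq_div_iff]

lemma exp_neg_lin_tendsto {c : ℝ} (hc : c < 0) :
    Tendsto (fun t : ℝ => Real.exp (c * t)) atTop (𝓝 0) :=
  Real.tendsto_exp_atBot.comp ((tendsto_const_mul_atBot_of_neg hc).mpr tendsto_id)

lemma term_tendsto {a x : ℝ} (ha : 0 < a) (hax : a ≤ x) :
    Tendsto (fun t => Real.log (1 - Real.exp (-2*t*x)) * Real.exp (2*t*a)) atTop
      (𝓝 (if x = a then -1 else 0)) := by
  have hx : 0 < x := lt_of_lt_of_le ha hax
  have hu : Tendsto (fun t => Real.exp (-2*t*x)) atTop (𝓝[≠] (0:ℝ)) := by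
    apply tendsto_nhdsWithin_of_tendsto_nhds_of_eventually_within
    · have := exp_neg_lin_tendsto (show -2*x < 0 by linarith)
      refine this.congr fun t => by ring_nf
    · filter_upwards with t using (Real.exp_pos _).ne'
  have h1 : Tendsto (fun t => Real.log (1 - Real.exp (-2*t*x)) / Real.exp (-2*t*x)) atTop
      (𝓝 (-1)) := slope_log_one_sub.comp hu
  have h2 : Tendsto (fun t => Real.exp (-2*t*x) * Real.exp (2*t*a)) atTop
      (𝓝 (if x = a then 1 else 0)) := by
    have he : ∀ t : ℝ, Real.exp (-2*t*x) * Real.exp (2*t*a) = Real.exp ((2*(a-x))*t) := by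
      intro t; rw [← Real.exp_add]; ring_nf
    rcases eq_or_ne x a with rfl | hne
    · simp only [if_pos rfl]
      refine Tendsto.congr (fun t => ?_) tendsto_const_nhds
      rw [he t]; simp
    · simp only [if_neg hne]
      refine (exp_neg_lin_tendsto (show 2*(a-x) < 0 by rcases lt_of_le_of_ne hax (Ne.symm hne) with h; linarith)).congr fun t => (he t).symm
  have := h1.mul h2
  rw [show (-1 : ℝ) * (if x = a then (1:ℝ) else 0) = (if x = a then -1 else 0) by split <;> ring] at this
  refine this.congr fun t => ?_
  have hu0 := (Real.exp_pos (-2*t*x)).ne'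
  field_simp

lemma multiset_sum_tendsto {α : Type*} (s : Multiset α) (f : α → ℝ → ℝ) (L : α → ℝ)
    (h : ∀ x ∈ s, Tendsto (f x) atTop (𝓝 (L x))) :
    Tendsto (fun t => (s.map (fun x => f x t)).sum) atTop (𝓝 (s.map L).sum) := by
  induction s using Multiset.induction with
  | empty => simpa using tendsto_const_nhds
  | cons a s ih =>
    simp only [Multiset.map_cons, Multiset.sum_cons]
    exact (h a (Multiset.mem_cons_self a s)).add
      (ih fun x hx => h x (Multiset.mem_cons_of_mem hx))

lemma linear_tendsto_zero {C D : ℝ} (h : Tendsto (fun t => C + D * t) atTop (𝓝 0)) :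
    C = 0 ∧ D = 0 := by
  have hD : D = 0 := by
    by_contra hD
    rcases lt_or_gt_of_ne hD with hneg | hpos
    · have : Tendsto (fun t => C + D * t) atTop atBot :=
        tendsto_atBot_add_const_left _ _ ((tendsto_const_mul_atBot_of_neg hneg).mpr tendsto_id)
      exact not_tendsto_nhds_of_tendsto_atBot this 0 h
    · have : Tendsto (fun t => C + D * t) atTop atTop :=
        tendsto_atTop_add_const_left _ _ ((tendsto_const_mul_atTop_of_pos hpos).mpr tendsto_id)
      exact not_tendsto_nhds_of_tendsto_atTop this 0 h
  subst hD
  simp only [zero_mul, add_zero] at h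
  exact ⟨tendsto_nhds_unique tendsto_const_nhds h, rfl⟩

lemma log_sinh_decomp {t x : ℝ} (ht : 0 < t) (hx : 0 < x) :
    Real.log (Real.sinh (t*x) / x)
      = t*x + Real.log (1 - Real.exp (-2*t*x)) - Real.log (2*x) := by
  have h1 : (0:ℝ) < 1 - Real.exp (-2*t*x) := by
    have : Real.exp (-2*t*x) < 1 := by
      rw [Real.exp_lt_one_iff]; nlinarith
    linarith
  have key : Real.sinh (t*x) / x = Real.exp (t*x) * (1 - Real.exp (-2*t*x)) / (2*x) := by
    rw [Real.sinh_eq]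
    rw [mul_sub, mul_one, ← Real.exp_add, show t*x + -2*t*x = -(t*x) by ring]
    field_simp
  rw [key, Real.log_div (by positivity) (by positivity),
    Real.log_mul (Real.exp_ne_zero _) h1.ne', Real.log_exp]

lemma log_multiset_prod (s : Multiset ℝ) (h : ∀ x ∈ s, 0 < x) :
    Real.log s.prod = (s.map Real.log).sum := by
  induction s using Multiset.induction with
  | empty => simp
  | cons a s ih =>
    have ha := h a (Multiset.mem_cons_self a s)
    have hs : (0:ℝ) < s.prod := Multiset.prod_pos fun x hx => h x (Multiset.mem_cons_of_mem hx)
    simp only [Multiset.prod_cons, Multiset.map_cons, Multiset.sum_cons]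
    rw [Real.log_mul ha.ne' hs.ne', ih fun x hx => h x (Multiset.mem_cons_of_mem hx)]

lemma count_sum_ite (s : Multiset ℝ) (a : ℝ) :
    (s.map (fun x => if x = a then (-1:ℝ) else 0)).sum = -(s.count a : ℝ) := by
  induction s using Multiset.induction with
  | empty => simp
  | cons b s ih =>
    simp only [Multiset.map_cons, Multiset.sum_cons, ih, Multiset.count_cons]
    rcases eq_or_ne b a with rfl | hb
    · simp
    · simp [hb, Ne.symm hb]


lemma term0_tendsto {x : ℝ} (hx : 0 < x) :
    Tendsto (fun t => Real.log (1 - Real.exp (-2*t*x))) atTop (𝓝 0) := by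
  have h1 : Tendsto (fun t => 1 - Real.exp (-2*t*x)) atTop (𝓝 1) := by
    have := (exp_neg_lin_tendsto (show -2*x < 0 by linarith))
    have h2 : Tendsto (fun t => Real.exp (-2*t*x)) atTop (𝓝 0) :=
      this.congr fun t => by ring_nf
    simpa using tendsto_const_nhds.sub h2
  have := (Real.continuousAt_log (by norm_num : (1:ℝ) ≠ 0)).tendsto.comp h1
  simpa [Function.comp_def] using this

lemma key_lemma : ∀ (n : ℕ) (s s' : Multiset ℝ) (B B' : ℝ), Multiset.card s = n →
    Multiset.card s' = n →
    (∀ x ∈ s, 0 < x) → (∀ x ∈ s', 0 < x) →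
    (∀ t : ℝ, 0 < t →
      Real.exp (t*B) * (s.map (fun x => Real.sinh (t*x)/x)).prod
        = Real.exp (t*B') * (s'.map (fun x => Real.sinh (t*x)/x)).prod) →
    s = s' ∧ B = B' := by
  intro n
  induction n with
  | zero =>
    intro s s' B B' hc hc' _ _ hid
    have hs : s = 0 := Multiset.card_eq_zero.mp hc
    have hs' : s' = 0 := Multiset.card_eq_zero.mp hc'
    subst hs hs'
    have := hid 1 one_pos
    simp only [Multiset.map_zero, Multiset.prod_zero, mul_one, one_mul] at this
    exact ⟨rfl, by simpa using Real.exp_injective this⟩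
  | succ n ih =>
    intro s s' B B' hc hc' hpos hpos' hid
    set G : Multiset ℝ → ℝ → ℝ :=
      fun m t => (m.map (fun x => Real.log (1 - Real.exp (-2*t*x)))).sum with hG
    set H : Multiset ℝ → ℝ := fun m => (m.map (fun x => Real.log (2*x))).sum with hH
    -- log identity
    have hlog : ∀ (c : ℝ) (m : Multiset ℝ), (∀ x ∈ m, 0 < x) → ∀ t : ℝ, 0 < t →
        Real.log (Real.exp (t*c) * (m.map (fun x => Real.sinh (t*x)/x)).prod)
          = t*c + (t * m.sum + G m t - H m) := by
      intro c m hm t ht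
      have hppos : ∀ y ∈ m.map (fun x => Real.sinh (t*x)/x), 0 < y := by
        intro y hy
        rcases Multiset.mem_map.mp hy with ⟨x, hx, rfl⟩
        exact div_pos (Real.sinh_pos_iff.mpr (mul_pos ht (hm x hx))) (hm x hx)
      have hP : (0:ℝ) < (m.map (fun x => Real.sinh (t*x)/x)).prod :=
        Multiset.prod_pos hppos
      rw [Real.log_mul (Real.exp_ne_zero _) hP.ne', Real.log_exp,
        log_multiset_prod _ hppos, Multiset.map_map]
      have hcg : Multiset.map (Real.log ∘ fun x => Real.sinh (t*x)/x) m
          = Multiset.map (fun x => t*x + (Real.log (1 - Real.exp (-2*t*x)) - Real.log (2*x))) m := by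
        apply Multiset.map_congr rfl
        intro x hx
        have := log_sinh_decomp ht (hm x hx)
        simp only [Function.comp_apply, this]
        ring
      rw [hcg, Multiset.sum_map_add, Multiset.sum_map_sub]
      have : Multiset.sum (Multiset.map (fun x => t*x) m) = t * m.sum := by
        rw [Multiset.sum_map_mul_left]
        simp
      rw [this, hG, hH]
      ring
    have hGG : ∀ t : ℝ, 0 < t → G s t - G s' t
        = (H s - H s') + (B' - B + (s'.sum - s.sum)) * t := by
      intro t ht
      have h1 := hlog B s hpos t ht
      have h2 := hlog B' s' hpos' t ht
      rw [hid t ht] at h1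
      rw [h2] at h1
      linarith [h1]
    -- G m t → 0
    have hG0 : ∀ m : Multiset ℝ, (∀ x ∈ m, 0 < x) → Tendsto (fun t => G m t) atTop (𝓝 0) := by
      intro m hm
      have := multiset_sum_tendsto m (fun x t => Real.log (1 - Real.exp (-2*t*x)))
        (fun _ => 0) (fun x hx => term0_tendsto (hm x hx))
      have h0 : ((m.map (fun _ => (0:ℝ))).sum) = 0 := by simp
      rw [hG]
      rw [← h0]
      exact this
    have hCD := linear_tendsto_zero (C := H s - H s') (D := B' - B + (s'.sum - s.sum)) (by
      refine ((hG0 s hpos).sub (hG0 s' hpos')).congr' ?_ |>.mono_right (by simp)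
      filter_upwards [eventually_gt_atTop 0] with t ht
      exact hGG t ht)
    have hGeq : ∀ t : ℝ, 0 < t → G s t = G s' t := by
      intro t ht
      have := hGG t ht
      rw [hCD.1, hCD.2] at this
      linarith
    -- minimum element
    have hune : (s + s').toFinset.Nonempty := by
      rw [Multiset.toFinset_nonempty]
      intro hzero
      have : Multiset.card (s + s') = 0 := by rw [hzero]; simp
      rw [Multiset.card_add, hc, hc'] at this
      omega
    set a : ℝ := (s + s').toFinset.min' hune with haa
    have hamem : a ∈ s + s' := Multiset.mem_toFinset.mp ((s + s').toFinset.min'_mem hune)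
    have hale : ∀ x ∈ s + s', a ≤ x := fun x hx =>
      Finset.min'_le _ _ (Multiset.mem_toFinset.mpr hx)
    have hapos : 0 < a := by
      rcases Multiset.mem_add.mp hamem with h | h
      exacts [hpos a h, hpos' a h]
    -- counts are equal
    have hcount : ∀ m : Multiset ℝ, (∀ x ∈ m, a ≤ x) →
        Tendsto (fun t => G m t * Real.exp (2*t*a)) atTop (𝓝 (-(m.count a : ℝ))) := by
      intro m hm
      have := multiset_sum_tendsto m
        (fun x t => Real.log (1 - Real.exp (-2*t*x)) * Real.exp (2*t*a))
        (fun x => if x = a then -1 else 0)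
        (fun x hx => term_tendsto hapos (hm x hx))
      rw [count_sum_ite] at this
      refine this.congr fun t => ?_
      rw [hG, ← Multiset.sum_map_mul_right]
    have hcnt : (s.count a : ℝ) = (s'.count a : ℝ) := by
      have h1 := hcount s (fun x hx => hale x (Multiset.mem_add.mpr (Or.inl hx)))
      have h2 := hcount s' (fun x hx => hale x (Multiset.mem_add.mpr (Or.inr hx)))
      have h1' : Tendsto (fun t => G s' t * Real.exp (2*t*a)) atTop (𝓝 (-(s.count a : ℝ))) := by
        refine h1.congr' ?_
        filter_upwards [eventually_gt_atTop 0] with t ht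
        rw [hGeq t ht]
      have := tendsto_nhds_unique h1' h2
      linarith
    -- a belongs to both
    have has : a ∈ s ∧ a ∈ s' := by
      rcases Multiset.mem_add.mp hamem with h | h
      · have : 0 < s.count a := Multiset.count_pos.mpr h
        refine ⟨h, Multiset.count_pos.mp ?_⟩
        have : (0:ℝ) < (s'.count a : ℝ) := by rw [← hcnt]; exact_mod_cast this
        exact_mod_cast this
      · have : 0 < s'.count a := Multiset.count_pos.mpr h
        refine ⟨Multiset.count_pos.mp ?_, h⟩
        have : (0:ℝ) < (s.count a : ℝ) := by rw [hcnt]; exact_mod_cast this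
        exact_mod_cast this
    -- cancel the common factor
    have hid' : ∀ t : ℝ, 0 < t →
        Real.exp (t*B) * ((s.erase a).map (fun x => Real.sinh (t*x)/x)).prod
          = Real.exp (t*B') * ((s'.erase a).map (fun x => Real.sinh (t*x)/x)).prod := by
      intro t ht
      have h1 := hid t ht
      rw [← Multiset.cons_erase has.1, ← Multiset.cons_erase has.2] at h1
      simp only [Multiset.map_cons, Multiset.prod_cons] at h1
      have hc0 : Real.sinh (t*a)/a ≠ 0 :=
        div_ne_zero (Real.sinh_pos_iff.mpr (by positivity)).ne' hapos.ne'
      apply mul_left_cancel₀ hc0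
      ring_nf
      ring_nf at h1
      linarith [h1]
    have hih := ih (s.erase a) (s'.erase a) B B'
      (by rw [Multiset.card_erase_of_mem has.1, hc]; rfl)
      (by rw [Multiset.card_erase_of_mem has.2, hc']; rfl)
      (fun x hx => hpos x (Multiset.mem_of_mem_erase hx))
      (fun x hx => hpos' x (Multiset.mem_of_mem_erase hx))
      hid'
    refine ⟨?_, hih.2⟩
    rw [← Multiset.cons_erase has.1, ← Multiset.cons_erase has.2, hih.1]


lemma ofFn_coe_multiset {n : ℕ} (f : Fin n → ℝ) :
    (↑(List.ofFn f) : Multiset ℝ) = Multiset.map f Finset.univ.val := by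
  rw [List.ofFn_eq_map]
  rfl

lemma exists_perm_of_multiset_eq {n : ℕ} (f g : Fin n → ℝ)
    (h : Multiset.map f Finset.univ.val = Multiset.map g Finset.univ.val) :
    ∃ σ : Equiv.Perm (Fin n), ∀ j, g (σ j) = f j := by
  have hfg : (List.ofFn f).Perm (List.ofFn g) := by
    rw [← Multiset.coe_eq_coe, ofFn_coe_multiset, ofFn_coe_multiset, h]
  have hperm : (List.ofFn (f ∘ Tuple.sort f)).Perm (List.ofFn (g ∘ Tuple.sort g)) :=
    (((Tuple.sort f).ofFn_comp_perm f).trans hfg).trans ((Tuple.sort g).ofFn_comp_perm g).symm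
  have heq : f ∘ Tuple.sort f = g ∘ Tuple.sort g :=
    List.ofFn_injective (List.Perm.eq_of_sortedLE
      (Tuple.monotone_sort f).sortedLE_ofFn (Tuple.monotone_sort g).sortedLE_ofFn hperm)
  refine ⟨(Tuple.sort f).symm.trans (Tuple.sort g), fun j => ?_⟩
  have := congrFun heq ((Tuple.sort f).symm j)
  simpa using this.symm

lemma mgf_eq_prod {n : ℕ} (b l : Fin n → ℝ) (hl : ∀ j, 0 < l j) {t : ℝ} (ht : t ≠ 0) :
    haveI : ∀ j, IsProbabilityMeasure (unif (b j) (l j)) := fun j => unif_prob (hl j)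
    ∫ y, Real.exp (t * y) ∂(Measure.map (fun x : Fin n → ℝ => ∑ j, x j)
        (Measure.pi fun j => unif (b j) (l j)))
      = Real.exp (t * ∑ j, b j) * ∏ j, (Real.sinh (t * l j) / (t * l j)) := by
  haveI : ∀ j, IsProbabilityMeasure (unif (b j) (l j)) := fun j => unif_prob (hl j)
  rw [mgf_map_sum (fun j => unif (b j) (l j)) t,
    Finset.prod_congr rfl (fun j _ => integral_unif (hl j) ht),
    Finset.prod_mul_distrib, ← Real.exp_sum, ← Finset.mul_sum]

/-- The convolution of `n` uniform distributions (the law of the sum of `n` independent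
uniform random variables) determines the multiset of widths and the sum of the shifts. -/
theorem conv_uniform_identifies (n : ℕ) (b l b' l' : Fin n → ℝ)
    (hl : ∀ j, 0 < l j) (hl' : ∀ j, 0 < l' j)
    (h : Measure.map (fun x : Fin n → ℝ => ∑ j, x j) (Measure.pi fun j => unif (b j) (l j))
       = Measure.map (fun x : Fin n → ℝ => ∑ j, x j) (Measure.pi fun j => unif (b' j) (l' j))) :
    (∃ σ : Equiv.Perm (Fin n), ∀ j, l' (σ j) = l j) ∧ (∑ j, b j = ∑ j, b' j) := by
  have hmgf : ∀ t : ℝ, t ≠ 0 →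
      Real.exp (t * ∑ j, b j) * ∏ j, (Real.sinh (t * l j) / (t * l j))
        = Real.exp (t * ∑ j, b' j) * ∏ j, (Real.sinh (t * l' j) / (t * l' j)) := by
    intro t ht
    rw [← mgf_eq_prod b l hl ht, ← mgf_eq_prod b' l' hl' ht, h]
  set S : Multiset ℝ := Multiset.map l Finset.univ.val with hS
  set S' : Multiset ℝ := Multiset.map l' Finset.univ.val with hS'
  have hprodS : ∀ (f : Fin n → ℝ) (t : ℝ),
      ((Multiset.map f Finset.univ.val).map (fun x => Real.sinh (t*x)/x)).prod
        = ∏ j, Real.sinh (t * f j) / f j := by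
    intro f t
    rw [Multiset.map_map, Finset.prod_eq_multiset_prod]
    rfl
  have hsplit : ∀ (f : Fin n → ℝ) (t : ℝ), t ≠ 0 → (∀ j, 0 < f j) →
      (∏ j, Real.sinh (t * f j) / (t * f j))
        = (∏ j, Real.sinh (t * f j) / f j) * (t⁻¹) ^ n := by
    intro f t ht hf
    rw [show (t⁻¹:ℝ)^n = ∏ _j : Fin n, t⁻¹ by simp, ← Finset.prod_mul_distrib]
    refine Finset.prod_congr rfl fun j _ => ?_
    rw [mul_comm t (f j), div_mul_eq_div_div, div_eq_mul_inv]
  have hkey : ∀ t : ℝ, 0 < t →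
      Real.exp (t * ∑ j, b j) * (S.map (fun x => Real.sinh (t*x)/x)).prod
        = Real.exp (t * ∑ j, b' j) * (S'.map (fun x => Real.sinh (t*x)/x)).prod := by
    intro t ht
    have h1 := hmgf t ht.ne'
    rw [hsplit l t ht.ne' hl, hsplit l' t ht.ne' hl'] at h1
    rw [hS, hS', hprodS, hprodS]
    rw [← mul_assoc, ← mul_assoc] at h1
    exact mul_right_cancel₀ (pow_ne_zero n (inv_ne_zero ht.ne')) h1
  have hcard : Multiset.card S = n := by simp [hS]
  have hcard' : Multiset.card S' = n := by simp [hS']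
  have hSpos : ∀ x ∈ S, 0 < x := by
    intro x hx
    rcases Multiset.mem_map.mp hx with ⟨j, _, rfl⟩
    exact hl j
  have hSpos' : ∀ x ∈ S', 0 < x := by
    intro x hx
    rcases Multiset.mem_map.mp hx with ⟨j, _, rfl⟩
    exact hl' j
  obtain ⟨hSeq, hBeq⟩ := key_lemma n S S' (∑ j, b j) (∑ j, b' j) hcard hcard' hSpos hSpos' hkey
  exact ⟨exists_perm_of_multiset_eq l l' hSeq, hBeq⟩
end
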